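/- Let A₁ be an n×n real symmetric matrix of block form [[0_s, P],[Pᵀ, 0_{n−s}]], let A₂ be an m×m real symmetric matrix, let D = diag(I_s, −I_{n−s}), and set 𝒜 = A₁⊗I_m + D⊗A₂. Let λ ≠ 0 and μ be real numbers such that λ² is an eigenvalue of A₁² with multiplicity p and μ² is an eigenvalue of A₂² with multiplicity q. Then √(λ² + μ²) and −√(λ² + μ²) are eigenvalues of 𝒜, each with multiplicity at least p·q/2; that is, dim ker(𝒜 − √(λ²+μ²)·I_{mn}) ≥ p·q/2 and dim ker(𝒜 + √(λ²+μ²)·I_{mn}) ≥ p·q/2. -/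

import Mathlib

open Matrix Kronecker

lemma kron_mulVec_tensor {n m : Type*} [Fintype n] [Fintype m]
    (A : Matrix n n ℝ) (B : Matrix m m ℝ) (x : n → ℝ) (w : m → ℝ) :
    (A ⊗ₖ B).mulVec (fun p => x p.1 * w p.2) =
      fun p => A.mulVec x p.1 * B.mulVec w p.2 := by
  funext pt
  simp only [Matrix.mulVec, dotProduct, kroneckerMap_apply, Fintype.sum_prod_type]
  rw [Finset.sum_mul_sum]
  refine Finset.sum_congr rfl fun c _ => Finset.sum_congr rfl fun d _ => by ring

lemma mem_eig_iff {n : Type*} [Fintype n] [DecidableEq n] (A : Matrix n n ℝ) (c : ℝ) (x : n → ℝ) :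
    x ∈ LinearMap.ker (A - c • (1 : Matrix n n ℝ)).mulVecLin ↔ A.mulVec x = c • x := by
  simp [LinearMap.mem_ker, Matrix.mulVecLin_apply, Matrix.sub_mulVec,
    Matrix.smul_mulVec, Matrix.one_mulVec, sub_eq_zero]

lemma mem_eig_sq_iff {n : Type*} [Fintype n] [DecidableEq n] (A : Matrix n n ℝ) (c : ℝ) (x : n → ℝ) :
    x ∈ LinearMap.ker (A ^ 2 - c • (1 : Matrix n n ℝ)).mulVecLin ↔
      A.mulVec (A.mulVec x) = c • x := by
  rw [mem_eig_iff, pow_two, ← Matrix.mulVec_mulVec]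


lemma tensor_linearIndependent {ι₁ ι₂ κ₁ κ₂ : Type*} [Fintype ι₁] [Fintype ι₂]
    {x : ι₁ → κ₁ → ℝ} {w : ι₂ → κ₂ → ℝ}
    (hx : LinearIndependent ℝ x) (hw : LinearIndependent ℝ w) :
    LinearIndependent ℝ (fun k : ι₁ × ι₂ => (fun p : κ₁ × κ₂ => x k.1 p.1 * w k.2 p.2)) := by
  rw [Fintype.linearIndependent_iff] at hx hw ⊢
  intro g hg k
  have key : ∀ (j : ι₂) (a : κ₁), ∑ i, g (i, j) * x i a = 0 := by
    intro j a
    have h1 : ∑ j', (∑ i, g (i, j') * x i a) • w j' = 0 := by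
      funext b
      have := congrFun hg (a, b)
      simp only [Finset.sum_apply, Pi.smul_apply, smul_eq_mul, Pi.zero_apply,
        Fintype.sum_prod_type] at this ⊢
      rw [← this]
      rw [Finset.sum_comm]
      refine Finset.sum_congr rfl fun j' _ => ?_
      rw [Finset.sum_mul]
      refine Finset.sum_congr rfl fun i _ => by ring
    exact hw _ h1 j
  have h2 : ∑ i, g (i, k.2) • x i = 0 := by
    funext a
    simpa [Finset.sum_apply] using key k.2 a
  have := hx _ h2 k.1
  simpa using this

lemma half_mult {n : Type*} [Fintype n] [DecidableEq n] (A₁ D : Matrix n n ℝ)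
    (hDD : D * D = 1) (hanti : D * A₁ = -(A₁ * D)) (lam ν : ℝ)
    (hν : ν ^ 2 = lam ^ 2) (hν0 : ν ≠ 0) :
    Module.finrank ℝ (LinearMap.ker (A₁ ^ 2 - lam ^ 2 • (1 : Matrix n n ℝ)).mulVecLin) ≤
      2 * Module.finrank ℝ (LinearMap.ker (A₁ - ν • (1 : Matrix n n ℝ)).mulVecLin) := by
  set E := LinearMap.ker (A₁ - ν • (1 : Matrix n n ℝ)).mulVecLin with hE
  set F := LinearMap.ker (A₁ - (-ν) • (1 : Matrix n n ℝ)).mulVecLin with hF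
  have hAD : A₁ * D = -(D * A₁) := by rw [hanti, neg_neg]
  have hDmap : ∀ x ∈ F, D.mulVecLin x ∈ E := by
    intro x hx
    rw [hF, mem_eig_iff] at hx
    rw [hE, Matrix.mulVecLin_apply, mem_eig_iff, Matrix.mulVec_mulVec, hAD,
      Matrix.neg_mulVec, ← Matrix.mulVec_mulVec, hx]
    simp [Matrix.mulVec_smul, Matrix.mulVec_neg]
  have hfinj : Function.Injective ((Matrix.mulVecLin D).restrict hDmap) := by
    intro a b hab
    have h1 := congrArg Subtype.val hab
    simp only [LinearMap.restrict_apply, Matrix.mulVecLin_apply] at h1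
    have h2 := congrArg D.mulVec h1
    rw [Matrix.mulVec_mulVec, Matrix.mulVec_mulVec, hDD, Matrix.one_mulVec,
      Matrix.one_mulVec] at h2
    exact Subtype.ext h2
  have h1 : Module.finrank ℝ F ≤ Module.finrank ℝ E :=
    LinearMap.finrank_le_finrank_of_injective hfinj
  have hsub : LinearMap.ker (A₁ ^ 2 - lam ^ 2 • (1 : Matrix n n ℝ)).mulVecLin ≤ E ⊔ F := by
    intro u hu
    rw [mem_eig_sq_iff] at hu
    refine Submodule.mem_sup.2 ⟨(2 * ν)⁻¹ • (A₁.mulVec u + ν • u), ?_,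
      (2 * ν)⁻¹ • (ν • u - A₁.mulVec u), ?_, ?_⟩
    · rw [hE, mem_eig_iff]
      rw [Matrix.mulVec_smul, Matrix.mulVec_add, Matrix.mulVec_smul, hu, ← hν]
      match_scalars <;> field_simp <;> ring
    · rw [hF, mem_eig_iff]
      rw [Matrix.mulVec_smul, Matrix.mulVec_sub, Matrix.mulVec_smul, hu, ← hν]
      match_scalars <;> field_simp <;> ring
    · match_scalars <;> field_simp <;> ring
  calc Module.finrank ℝ (LinearMap.ker (A₁ ^ 2 - lam ^ 2 • (1 : Matrix n n ℝ)).mulVecLin)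
      ≤ Module.finrank ℝ (E ⊔ F : Submodule ℝ (n → ℝ)) := Submodule.finrank_mono hsub
    _ ≤ 2 * Module.finrank ℝ E := by
        have := Submodule.finrank_sup_add_finrank_inf_eq E F
        omega


lemma key_lemma {n m : Type*} [Fintype n] [DecidableEq n] [Fintype m] [DecidableEq m]
    (A₁ : Matrix n n ℝ) (A₂ : Matrix m m ℝ) (D : Matrix n n ℝ)
    (hDD : D * D = 1) (hanti : D * A₁ = -(A₁ * D))
    (𝒜 : Matrix (n × m) (n × m) ℝ) (h𝒜 : 𝒜 = A₁ ⊗ₖ (1 : Matrix m m ℝ) + D ⊗ₖ A₂)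
    (lam mu ν θ : ℝ) (hν : ν ^ 2 = lam ^ 2) (hθ : θ ^ 2 = lam ^ 2 + mu ^ 2)
    (hν0 : ν ≠ 0) (hα0 : ν + θ ≠ 0)
    (hr2 : Module.finrank ℝ (LinearMap.ker (A₁ ^ 2 - lam ^ 2 • (1 : Matrix n n ℝ)).mulVecLin) ≤
      2 * Module.finrank ℝ (LinearMap.ker (A₁ - ν • (1 : Matrix n n ℝ)).mulVecLin))
    (p q : ℕ)
    (hp : Module.finrank ℝ (LinearMap.ker (A₁ ^ 2 - lam ^ 2 • (1 : Matrix n n ℝ)).mulVecLin) = p)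
    (hq : Module.finrank ℝ (LinearMap.ker (A₂ ^ 2 - mu ^ 2 • (1 : Matrix m m ℝ)).mulVecLin) = q) :
    p * q ≤ 2 * Module.finrank ℝ
      (LinearMap.ker (𝒜 - θ • (1 : Matrix (n × m) (n × m) ℝ)).mulVecLin) := by
  classical
  set α := ν + θ with hαdef
  set E := LinearMap.ker (A₁ - ν • (1 : Matrix n n ℝ)).mulVecLin with hE
  set K₂ := LinearMap.ker (A₂ ^ 2 - mu ^ 2 • (1 : Matrix m m ℝ)).mulVecLin with hK₂
  set r := Module.finrank ℝ E with hrdef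
  have hr : p ≤ 2 * r := hp ▸ hr2
  -- bases
  let b₁ : Module.Basis (Fin r) ℝ E := Module.finBasis ℝ E
  let b₂ : Module.Basis (Fin q) ℝ K₂ := (Module.finBasis ℝ K₂).reindex (finCongr hq)
  let x : Fin r → (n → ℝ) := fun i => (b₁ i : n → ℝ)
  let w : Fin q → (m → ℝ) := fun j => (b₂ j : m → ℝ)
  have hx : LinearIndependent ℝ x :=
    b₁.linearIndependent.map' E.subtype (Submodule.ker_subtype E)
  have hw : LinearIndependent ℝ w :=
    b₂.linearIndependent.map' K₂.subtype (Submodule.ker_subtype K₂)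
  have hx1 : ∀ i, A₁.mulVec (x i) = ν • x i := fun i => (mem_eig_iff _ _ _).1 (b₁ i).2
  have hw1 : ∀ j, A₂.mulVec (A₂.mulVec (w j)) = mu ^ 2 • w j :=
    fun j => (mem_eig_sq_iff _ _ _).1 (b₂ j).2
  have hAD : A₁ * D = -(D * A₁) := by rw [hanti, neg_neg]
  have hx2 : ∀ i, A₁.mulVec (D.mulVec (x i)) = (-ν) • D.mulVec (x i) := by
    intro i
    rw [Matrix.mulVec_mulVec, hAD, Matrix.neg_mulVec, ← Matrix.mulVec_mulVec, hx1]
    simp [Matrix.mulVec_smul]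
  have hx3 : ∀ i, D.mulVec (D.mulVec (x i)) = x i := by
    intro i
    rw [Matrix.mulVec_mulVec, hDD, Matrix.one_mulVec]
  -- the tensor vectors
  set v : Fin r × Fin q → (n × m → ℝ) :=
    fun k => fun pt => x k.1 pt.1 * w k.2 pt.2 with hvdef
  set t2 : Fin r × Fin q → (n × m → ℝ) :=
    fun k => fun pt => D.mulVec (x k.1) pt.1 * A₂.mulVec (w k.2) pt.2 with ht2def
  set u : Fin r × Fin q → (n × m → ℝ) := fun k => α • v k + t2 k with hudef
  have hv : LinearIndependent ℝ v := by
    rw [hvdef]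
    exact tensor_linearIndependent hx hw
  have hAv : ∀ k, 𝒜.mulVec (v k) = ν • v k + t2 k := by
    intro k
    rw [h𝒜, Matrix.add_mulVec, hvdef]
    rw [kron_mulVec_tensor, kron_mulVec_tensor]
    funext pt
    simp [hx1 k.1, Matrix.one_mulVec, ht2def]
    ring
  have hAt : ∀ k, 𝒜.mulVec (t2 k) = mu ^ 2 • v k + (-ν) • t2 k := by
    intro k
    rw [h𝒜, Matrix.add_mulVec, ht2def]
    rw [kron_mulVec_tensor, kron_mulVec_tensor]
    funext pt
    simp [hx2 k.1, hx3 k.1, hw1 k.2, Matrix.one_mulVec, hvdef]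
    ring
  have hmem : ∀ k, u k ∈ LinearMap.ker (𝒜 - θ • (1 : Matrix (n × m) (n × m) ℝ)).mulVecLin := by
    intro k
    rw [mem_eig_iff, hudef]
    simp only
    rw [Matrix.mulVec_add, Matrix.mulVec_smul, hAv k, hAt k]
    match_scalars
    · rw [hαdef]; nlinarith [hθ, hν]
    · rw [hαdef]; ring
  -- linear independence of u via L
  set L := ((A₁ + ν • (1 : Matrix n n ℝ)) ⊗ₖ (1 : Matrix m m ℝ)).mulVecLin with hLdef
  have hLv : ∀ k, L (v k) = (2 * ν) • v k := by
    intro k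
    rw [hLdef, Matrix.mulVecLin_apply, hvdef, kron_mulVec_tensor]
    funext pt
    simp [Matrix.add_mulVec, hx1 k.1, Matrix.one_mulVec, Matrix.smul_mulVec]
    ring
  have hLt : ∀ k, L (t2 k) = 0 := by
    intro k
    have h0 : (A₁ + ν • (1 : Matrix n n ℝ)).mulVec (D.mulVec (x k.1)) = 0 := by
      rw [Matrix.add_mulVec, Matrix.smul_mulVec, Matrix.one_mulVec, hx2 k.1]
      simp
    rw [hLdef, Matrix.mulVecLin_apply, ht2def, kron_mulVec_tensor, h0]
    funext pt
    simp
  have hscal : (2 * ν * α) ≠ 0 := by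
    intro h
    rcases mul_eq_zero.1 h with h | h
    · rcases mul_eq_zero.1 h with h | h
      · norm_num at h
      · exact hν0 h
    · exact hα0 h
  have hcomp : (⇑((2 * ν * α)⁻¹ • L) ∘ u) = v := by
    funext k
    have hLu : L (u k) = (2 * ν * α) • v k := by
      show L (α • v k + t2 k) = _
      rw [map_add, _root_.map_smul, hLv k, hLt k, add_zero, smul_smul,
        show α * (2 * ν) = 2 * ν * α from by ring]
    simp only [Function.comp_apply, LinearMap.smul_apply, hLu, smul_smul]
    rw [show (2 * ν * α)⁻¹ * (2 * ν * α) = 1 from inv_mul_cancel₀ hscal, one_smul]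
  have hu : LinearIndependent ℝ u := by
    apply LinearIndependent.of_comp ((2 * ν * α)⁻¹ • L)
    rw [hcomp]
    exact hv
  -- conclude
  set K := LinearMap.ker (𝒜 - θ • (1 : Matrix (n × m) (n × m) ℝ)).mulVecLin with hK
  have hu' : LinearIndependent ℝ (fun k => (⟨u k, hmem k⟩ : K)) := by
    apply LinearIndependent.of_comp K.subtype
    exact hu
  have hcard : r * q ≤ Module.finrank ℝ K := by
    have := hu'.fintype_card_le_finrank
    simpa [Fintype.card_prod] using this
  calc p * q ≤ (2 * r) * q := Nat.mul_le_mul_right q hr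
    _ = 2 * (r * q) := by ring
    _ ≤ 2 * Module.finrank ℝ K := by omega

/-- If `λ ≠ 0` and `λ²` is an eigenvalue of `A₁²` with multiplicity `p`, where
`A₁ = [[0,P],[Pᵀ,0]]`, and `μ²` is an eigenvalue of the symmetric matrix `A₂²` with
multiplicity `q`, then `√(λ² + μ²)` and `−√(λ² + μ²)` are eigenvalues of the signed Cartesian
product `𝒜 = A₁ ⊗ I_m + D ⊗ A₂`, each with multiplicity at least `p·q/2`. -/
theorem eigenvalue_pm_sqrt_of_signed_cartesian_product (s t m : ℕ)
    (P : Matrix (Fin s) (Fin t) ℝ)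
    (A₂ : Matrix (Fin m) (Fin m) ℝ) (hA₂symm : A₂.IsSymm)
    (A₁ : Matrix (Fin s ⊕ Fin t) (Fin s ⊕ Fin t) ℝ)
    (hA₁ : A₁ = Matrix.fromBlocks 0 P Pᵀ 0)
    (D : Matrix (Fin s ⊕ Fin t) (Fin s ⊕ Fin t) ℝ)
    (hD : D = Matrix.fromBlocks 1 0 0 (-1))
    (𝒜 : Matrix ((Fin s ⊕ Fin t) × Fin m) ((Fin s ⊕ Fin t) × Fin m) ℝ)
    (h𝒜 : 𝒜 = A₁ ⊗ₖ (1 : Matrix (Fin m) (Fin m) ℝ) + D ⊗ₖ A₂)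
    (lam mu : ℝ) (hlam : lam ≠ 0) (p q : ℕ) (hp0 : 0 < p) (hq0 : 0 < q)
    (hp : Module.finrank ℝ (LinearMap.ker (A₁ ^ 2 - (lam ^ 2) •
      (1 : Matrix (Fin s ⊕ Fin t) (Fin s ⊕ Fin t) ℝ)).mulVecLin) = p)
    (hq : Module.finrank ℝ (LinearMap.ker (A₂ ^ 2 - (mu ^ 2) •
      (1 : Matrix (Fin m) (Fin m) ℝ)).mulVecLin) = q) :
    p * q ≤ 2 * Module.finrank ℝ (LinearMap.ker (𝒜 - Real.sqrt (lam ^ 2 + mu ^ 2) •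
      (1 : Matrix ((Fin s ⊕ Fin t) × Fin m) ((Fin s ⊕ Fin t) × Fin m) ℝ)).mulVecLin) ∧
    p * q ≤ 2 * Module.finrank ℝ (LinearMap.ker (𝒜 + Real.sqrt (lam ^ 2 + mu ^ 2) •
      (1 : Matrix ((Fin s ⊕ Fin t) × Fin m) ((Fin s ⊕ Fin t) × Fin m) ℝ)).mulVecLin) := by
  have hDD : D * D = 1 := by
    rw [hD, ← Matrix.fromBlocks_one]
    simp [Matrix.fromBlocks_multiply]
  have hanti : D * A₁ = -(A₁ * D) := by
    rw [hD, hA₁]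
    simp [Matrix.fromBlocks_multiply, Matrix.fromBlocks_neg]
  set c := Real.sqrt (lam ^ 2 + mu ^ 2) with hcdef
  have hc2 : c ^ 2 = lam ^ 2 + mu ^ 2 := Real.sq_sqrt (by positivity)
  have hc0 : 0 ≤ c := Real.sqrt_nonneg _
  have habs : (0:ℝ) < |lam| := abs_pos.2 hlam
  constructor
  · exact key_lemma A₁ A₂ D hDD hanti 𝒜 h𝒜 lam mu |lam| c (sq_abs lam) hc2
      (abs_ne_zero.2 hlam) (by positivity)
      (half_mult A₁ D hDD hanti lam |lam| (sq_abs lam) (abs_ne_zero.2 hlam)) p q hp hq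
  · have hrw : 𝒜 + c • (1 : Matrix ((Fin s ⊕ Fin t) × Fin m) ((Fin s ⊕ Fin t) × Fin m) ℝ)
        = 𝒜 - (-c) • 1 := by rw [neg_smul, sub_neg_eq_add]
    rw [hrw]
    exact key_lemma A₁ A₂ D hDD hanti 𝒜 h𝒜 lam mu (-|lam|) (-c)
      (by rw [neg_pow]; simp [sq_abs]) (by rw [neg_pow]; simpa using hc2)
      (by simpa using hlam) (by nlinarith)
      (half_mult A₁ D hDD hanti lam (-|lam|) (by rw [neg_pow]; simp [sq_abs])
        (by simpa using hlam)) p q hp hq
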